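/- A term β-equivalent to a term in head normal form is solvable: if t ≃_β h and h is in head normal form, then the head reduction of t terminates. -/

import Mathlib

inductive Lam : Type
  | var : ℕ → Lam
  | app : Lam → Lam → Lam
  | lam : Lam → Lam
deriving DecidableEq

namespace Lam

/-- Lift (shift up by one) all de Bruijn indices ≥ d. -/
def lift (d : ℕ) : Lam → Lam
  | var n => if n < d then var n else var (n + 1)
  | app u v => app (lift d u) (lift d v)
  | lam u => lam (lift (d + 1) u)

/-- Capture-avoiding substitution of s for the de Bruijn index d. -/
def subst (d : ℕ) (s : Lam) : Lam → Lam
  | var n => if n = d then s else if n < d then var n else var (n - 1)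
  | app u v => app (subst d s u) (subst d s v)
  | lam u => lam (subst (d + 1) (lift 0 s) u)

/-- One-step β-reduction. -/
inductive Step : Lam → Lam → Prop
  | beta (u v : Lam) : Step (app (lam u) v) (subst 0 v u)
  | appL {u u' : Lam} (v : Lam) : Step u u' → Step (app u v) (app u' v)
  | appR (u : Lam) {v v' : Lam} : Step v v' → Step (app u v) (app u v')
  | lam {u u' : Lam} : Step u u' → Step (lam u) (lam u')

/-- β-equivalence: the reflexive-symmetric-transitive closure of β-reduction. -/
inductive BetaEq : Lam → Lam → Prop
  | step {u v} : Step u v → BetaEq u v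
  | refl (u) : BetaEq u u
  | symm {u v} : BetaEq u v → BetaEq v u
  | trans {u v w} : BetaEq u v → BetaEq v w → BetaEq u w

/-- One step of head reduction: contract the head redex. -/
inductive HeadStep : Lam → Lam → Prop
  | beta (u v : Lam) : HeadStep (app (lam u) v) (subst 0 v u)
  | appL {u u' : Lam} (v : Lam) : HeadStep u u' → (∀ w, u ≠ lam w) →
      HeadStep (app u v) (app u' v)
  | lam {u u' : Lam} : HeadStep u u' → HeadStep (lam u) (lam u')

/-- `Heads u v`: u head-reduces to v in finitely many steps. -/
def Heads : Lam → Lam → Prop := Relation.ReflTransGen HeadStep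

/-- A term is normal if it contains no β-redex. -/
def Normal (t : Lam) : Prop := ∀ u, ¬ Step t u

/-- All free de Bruijn indices of the term are < d. -/
def ClosedUnder : ℕ → Lam → Prop
  | d, var n => n < d
  | d, app u v => ClosedUnder d u ∧ ClosedUnder d v
  | d, lam u => ClosedUnder (d + 1) u

/-- A term is closed if it has no free variables. -/
def Closed (t : Lam) : Prop := ClosedUnder 0 t

/-- The de Bruijn index i occurs free in the term. -/
def FreeIn : ℕ → Lam → Prop
  | i, var n => n = i
  | i, app u v => FreeIn i u ∨ FreeIn i v
  | i, lam u => FreeIn (i + 1) u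

/-- n-fold application: (f^n x). -/
def iterApp : ℕ → Lam → Lam → Lam
  | 0, _, x => x
  | n + 1, f, x => app f (iterApp n f x)

/-- The n-th Church numeral λx.λf.(f^n x). -/
def church (n : ℕ) : Lam := lam (lam (iterApp n (var 0) (var 1)))

/-- T = λx.λy.x -/
def Ttm : Lam := lam (lam (var 1))

/-- F = λx.λy.y -/
def Ftm : Lam := lam (lam (var 0))

end Lam

namespace Lam

/-- Terms of the form (x v₁ … vₘ). -/
inductive NeutralHNF : Lam → Prop
  | var (n : ℕ) : NeutralHNF (var n)
  | app {u : Lam} (v : Lam) : NeutralHNF u → NeutralHNF (app u v)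

/-- Head normal forms: λx₁…λxₙ.(x v₁ … vₘ). -/
inductive HNF : Lam → Prop
  | of {u : Lam} : NeutralHNF u → HNF u
  | lam {u : Lam} : HNF u → HNF (lam u)

/-! ### Auxiliary development -/

def Steps : Lam → Lam → Prop := Relation.ReflTransGen Step

theorem lift_lift (t : Lam) : ∀ i j, i ≤ j →
    lift i (lift j t) = lift (j + 1) (lift i t) := by
  induction t with
  | var n =>
    intro i j h
    simp only [lift]
    split_ifs <;> simp only [lift] <;> (try split_ifs) <;>
      first
        | rfl
        | (simp only [Lam.var.injEq]; omega)
        | (exfalso; omega)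
  | app u v ihu ihv => intro i j h; simp [lift, ihu _ _ h, ihv _ _ h]
  | lam u ih => intro i j h; simp [lift, ih (i+1) (j+1) (by omega)]

theorem subst_lift (t : Lam) : ∀ d s, subst d s (lift d t) = t := by
  induction t with
  | var n =>
    intro d s
    simp only [lift]
    split_ifs <;> simp only [subst] <;> (try split_ifs) <;>
      first
        | rfl
        | (simp only [Lam.var.injEq]; omega)
        | (exfalso; omega)
  | app u v ihu ihv => intro d s; simp [lift, subst, ihu, ihv]
  | lam u ih => intro d s; simp [lift, subst, ih]

theorem lift_subst_low (t : Lam) : ∀ i d s, i ≤ d →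
    lift i (subst d s t) = subst (d + 1) (lift i s) (lift i t) := by
  induction t with
  | var n =>
    intro i d s h
    simp only [subst, lift]
    split_ifs <;> (try simp only [lift, subst]) <;> (try split_ifs) <;>
      (try simp only [lift, subst]) <;> (try split_ifs) <;>
      first
        | rfl
        | (simp only [Lam.var.injEq]; omega)
        | (exfalso; omega)
  | app u v ihu ihv => intro i d s h; simp [lift, subst, ihu _ _ _ h, ihv _ _ _ h]
  | lam u ih =>
    intro i d s h
    simp only [lift, subst, ih (i+1) (d+1) _ (by omega)]
    rw [lift_lift s 0 i (by omega)]

theorem lift_subst_high (t : Lam) : ∀ i d s, d ≤ i →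
    lift i (subst d s t) = subst d (lift i s) (lift (i + 1) t) := by
  induction t with
  | var n =>
    intro i d s h
    simp only [subst, lift]
    split_ifs <;> (try simp only [lift, subst]) <;> (try split_ifs) <;>
      (try simp only [lift, subst]) <;> (try split_ifs) <;>
      first
        | rfl
        | (simp only [Lam.var.injEq]; omega)
        | (exfalso; omega)
  | app u v ihu ihv => intro i d s h; simp [lift, subst, ihu _ _ _ h, ihv _ _ _ h]
  | lam u ih =>
    intro i d s h
    simp only [lift, subst, ih (i+1) (d+1) _ (by omega)]
    rw [lift_lift s 0 i (by omega)]

theorem subst_subst (t : Lam) : ∀ i d s v, i ≤ d →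
    subst d s (subst i v t) =
      subst i (subst d s v) (subst (d + 1) (lift i s) t) := by
  induction t with
  | var n =>
    intro i d s v h
    simp only [subst]
    split_ifs <;> (try simp only [lift, subst]) <;> (try split_ifs) <;>
      (try simp only [lift, subst]) <;> (try split_ifs) <;>
      first
        | rfl
        | (simp only [Lam.var.injEq]; omega)
        | (exfalso; omega)
        | (rw [subst_lift])
  | app u v' ihu ihv => intro i d s v h; simp [subst, ihu _ _ _ _ h, ihv _ _ _ _ h]
  | lam u ih =>
    intro i d s v h
    simp only [subst, ih (i+1) (d+1) _ _ (by omega)]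
    rw [lift_lift s 0 i (by omega), lift_subst_low v 0 d s (by omega)]

/-! ### Parallel reduction and confluence -/

inductive Par : Lam → Lam → Prop
  | var (n : ℕ) : Par (var n) (var n)
  | app {u u' v v' : Lam} : Par u u' → Par v v' → Par (app u v) (app u' v')
  | lam {u u' : Lam} : Par u u' → Par (lam u) (lam u')
  | beta {u u' v v' : Lam} : Par u u' → Par v v' →
      Par (app (lam u) v) (subst 0 v' u')

theorem Par.refl (t : Lam) : Par t t := by
  induction t with
  | var n => exact Par.var n
  | app u v ihu ihv => exact Par.app ihu ihv
  | lam u ih => exact Par.lam ih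

theorem par_of_step {t u : Lam} (h : Step t u) : Par t u := by
  induction h with
  | beta a b => exact Par.beta (Par.refl a) (Par.refl b)
  | appL v _ ih => exact Par.app ih (Par.refl v)
  | appR u _ ih => exact Par.app (Par.refl u) ih
  | lam _ ih => exact Par.lam ih

theorem steps_appL {u u' : Lam} (v : Lam) (h : Steps u u') :
    Steps (app u v) (app u' v) :=
  Relation.ReflTransGen.lift (fun x => app x v) (fun _ _ hs => Step.appL v hs) _ _ h

theorem steps_appR (u : Lam) {v v' : Lam} (h : Steps v v') :
    Steps (app u v) (app u v') :=
  Relation.ReflTransGen.lift (fun x => app u x) (fun _ _ hs => Step.appR u hs) _ _ h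

theorem steps_lam {u u' : Lam} (h : Steps u u') : Steps (lam u) (lam u') :=
  Relation.ReflTransGen.lift (fun x => lam x) (fun _ _ hs => Step.lam hs) _ _ h

theorem steps_of_par {t u : Lam} (h : Par t u) : Steps t u := by
  induction h with
  | var n => exact .refl
  | app _ _ ihu ihv => exact (steps_appL _ ihu).trans (steps_appR _ ihv)
  | lam _ ih => exact steps_lam ih
  | beta _ _ ihu ihv =>
    exact ((steps_appL _ (steps_lam ihu)).trans (steps_appR _ ihv)).trans
      (Relation.ReflTransGen.single (Step.beta _ _))

theorem par_lift {t t' : Lam} (h : Par t t') : ∀ d, Par (lift d t) (lift d t') := by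
  induction h with
  | var n => intro d; simp only [lift]; split_ifs <;> exact Par.refl _
  | app _ _ ihu ihv => intro d; exact Par.app (ihu d) (ihv d)
  | lam _ ih => intro d; exact Par.lam (ih (d+1))
  | @beta u u' v v' _ _ ihu ihv =>
    intro d
    simp only [lift]
    rw [lift_subst_high u' d 0 v' (by omega)]
    exact Par.beta (ihu (d+1)) (ihv d)

theorem par_subst {t t' : Lam} (h : Par t t') :
    ∀ d s s', Par s s' → Par (subst d s t) (subst d s' t') := by
  induction h with
  | var n =>
    intro d s s' hs
    simp only [subst]; split_ifs <;> first | exact hs | exact Par.refl _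
  | app _ _ ihu ihv => intro d s s' hs; exact Par.app (ihu d s s' hs) (ihv d s s' hs)
  | lam _ ih => intro d s s' hs; exact Par.lam (ih (d+1) _ _ (par_lift hs 0))
  | beta _ _ ihu ihv =>
    intro d s s' hs
    simp only [subst]
    rw [subst_subst _ 0 d _ _ (by omega)]
    exact Par.beta (ihu (d+1) _ _ (par_lift hs 0)) (ihv d s s' hs)

/-- Complete development. -/
def cd : Lam → Lam
  | var n => var n
  | lam u => lam (cd u)
  | app (lam u) v => subst 0 (cd v) (cd u)
  | app (var n) v => app (var n) (cd v)
  | app (app a b) v => app (cd (app a b)) (cd v)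

theorem par_cd {t u : Lam} (h : Par t u) : Par u (cd t) := by
  induction h with
  | var n => exact Par.var n
  | lam _ ih => exact Par.lam ih
  | beta _ _ ihu ihv => exact par_subst ihu 0 _ _ ihv
  | app hu hv ihu ihv =>
    rename_i a a' b b'
    match a, hu with
    | var n, hu =>
      cases hu
      exact Par.app ihu ihv
    | app x y, hu => exact Par.app ihu ihv
    | lam x, hu =>
      cases hu with
      | lam hx =>
        cases ihu with
        | lam ihx => exact Par.beta ihx ihv

theorem par_diamond {t u v : Lam} (h1 : Par t u) (h2 : Par t v) :
    ∃ w, Par u w ∧ Par v w :=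
  ⟨cd t, par_cd h1, par_cd h2⟩

theorem steps_confluent {t u v : Lam} (h1 : Steps t u) (h2 : Steps t v) :
    ∃ w, Steps u w ∧ Steps v w := by
  have hsub : ∀ {a b : Lam}, Steps a b → Relation.ReflTransGen Par a b :=
    fun h => Relation.ReflTransGen.mono (fun _ _ => par_of_step) _ _ h
  have hj := Relation.church_rosser
    (r := Par)
    (fun a b c hab hac => by
      obtain ⟨d, h1, h2⟩ := par_diamond hab hac
      exact ⟨d, Relation.ReflGen.single h1, Relation.ReflTransGen.single h2⟩)
    (hsub h1) (hsub h2)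
  obtain ⟨w, hw1, hw2⟩ := hj
  have conv : ∀ {a b : Lam}, Relation.ReflTransGen Par a b → Steps a b := by
    intro a b hab
    induction hab with
    | refl => exact .refl
    | tail _ hp ih => exact ih.trans (steps_of_par hp)
  exact ⟨w, conv hw1, conv hw2⟩

theorem betaEq_join {t h : Lam} (he : BetaEq t h) :
    ∃ k, Steps t k ∧ Steps h k := by
  induction he with
  | step hs => exact ⟨_, Relation.ReflTransGen.single hs, .refl⟩
  | refl u => exact ⟨u, .refl, .refl⟩
  | symm _ ih => obtain ⟨k, h1, h2⟩ := ih; exact ⟨k, h2, h1⟩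
  | trans _ _ ih1 ih2 =>
    obtain ⟨k1, ha, hb⟩ := ih1
    obtain ⟨k2, hc, hd⟩ := ih2
    obtain ⟨w, h1, h2⟩ := steps_confluent hb hc
    exact ⟨w, ha.trans h1, hd.trans h2⟩

/-! ### HNF is preserved by reduction -/

theorem NeutralHNF.not_lam {u : Lam} (h : NeutralHNF u) : ∀ w, u ≠ lam w := by
  cases h <;> intro w hw <;> simp_all

theorem neutral_step {u u' : Lam} (h : NeutralHNF u) (hs : Step u u') :
    NeutralHNF u' := by
  induction hs with
  | beta a b => cases h with | app _ hn => exact absurd rfl (hn.not_lam a)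
  | appL v hs ih => cases h with | app _ hn => exact NeutralHNF.app _ (ih hn)
  | appR u hs ih => cases h with | app _ hn => exact NeutralHNF.app _ hn
  | lam hs ih => cases h

theorem hnf_step {u u' : Lam} (h : HNF u) (hs : Step u u') : HNF u' := by
  induction hs with
  | beta a b =>
    cases h with
    | of hn => cases hn with | app _ hn => exact absurd rfl (hn.not_lam a)
  | appL v hs ih =>
    cases h with
    | of hn => cases hn with | app _ hn => exact HNF.of (NeutralHNF.app _ (neutral_step hn hs))
  | appR u hs ih =>
    cases h with
    | of hn => cases hn with | app _ hn => exact HNF.of (NeutralHNF.app _ hn)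
  | lam hs ih =>
    cases h with
    | of hn => cases hn
    | lam hu => exact HNF.lam (ih hu)

theorem hnf_steps {u u' : Lam} (h : HNF u) (hs : Steps u u') : HNF u' := by
  induction hs with
  | refl => exact h
  | tail _ hstep ih => exact hnf_step ih hstep

/-! ### Kashima-style standardization -/

/-- One step of weak head reduction. -/
inductive Whr : Lam → Lam → Prop
  | beta (u v : Lam) : Whr (app (lam u) v) (subst 0 v u)
  | appL {u u' : Lam} (v : Lam) : Whr u u' → Whr (app u v) (app u' v)

def Hap : Lam → Lam → Prop := Relation.ReflTransGen Whr

inductive St : Lam → Lam → Prop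
  | var {m : Lam} {n : ℕ} : Hap m (var n) → St m (var n)
  | lam {m m' n' : Lam} : Hap m (lam m') → St m' n' → St m (lam n')
  | app {m m1 m2 n1 n2 : Lam} : Hap m (app m1 m2) → St m1 n1 → St m2 n2 →
      St m (app n1 n2)

theorem st_of_hap {m m' n : Lam} (h : Hap m m') (hs : St m' n) : St m n := by
  cases hs with
  | var h2 => exact St.var (h.trans h2)
  | lam h2 h3 => exact St.lam (h.trans h2) h3
  | app h2 h3 h4 => exact St.app (h.trans h2) h3 h4

theorem St.refl (t : Lam) : St t t := by
  induction t with
  | var n => exact St.var .refl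
  | app u v ihu ihv => exact St.app .refl ihu ihv
  | lam u ih => exact St.lam .refl ih

theorem whr_lift {m m' : Lam} (h : Whr m m') (d : ℕ) :
    Whr (lift d m) (lift d m') := by
  induction h generalizing d with
  | beta u v =>
    simp only [lift]
    rw [lift_subst_high u d 0 v (by omega)]
    exact Whr.beta _ _
  | appL v _ ih => exact Whr.appL _ (ih d)

theorem whr_subst {m m' : Lam} (h : Whr m m') (d : ℕ) (s : Lam) :
    Whr (subst d s m) (subst d s m') := by
  induction h generalizing d s with
  | beta u v =>
    simp only [subst]
    rw [subst_subst u 0 d s v (by omega)]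
    exact Whr.beta _ _
  | appL v _ ih => exact Whr.appL _ (ih d s)

theorem hap_lift {m m' : Lam} (h : Hap m m') (d : ℕ) :
    Hap (lift d m) (lift d m') :=
  Relation.ReflTransGen.lift (lift d) (fun _ _ hs => whr_lift hs d) _ _ h

theorem hap_subst {m m' : Lam} (h : Hap m m') (d : ℕ) (s : Lam) :
    Hap (subst d s m) (subst d s m') :=
  Relation.ReflTransGen.lift (subst d s) (fun _ _ hs => whr_subst hs d s) _ _ h

theorem hap_appL {m m' : Lam} (v : Lam) (h : Hap m m') :
    Hap (app m v) (app m' v) :=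
  Relation.ReflTransGen.lift (fun x => app x v) (fun _ _ hs => Whr.appL v hs) _ _ h

theorem st_lift {m n : Lam} (h : St m n) : ∀ d, St (lift d m) (lift d n) := by
  induction h with
  | var h2 =>
    intro d
    have h3 := hap_lift h2 d
    simp only [lift] at h3 ⊢
    split_ifs at h3 ⊢ <;> exact St.var h3
  | lam h2 _ ih =>
    intro d
    have h3 := hap_lift h2 d
    simp only [lift] at h3 ⊢
    exact St.lam h3 (ih (d+1))
  | app h2 _ _ ih1 ih2 =>
    intro d
    have h3 := hap_lift h2 d
    simp only [lift] at h3 ⊢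
    exact St.app h3 (ih1 d) (ih2 d)

theorem st_subst {m n : Lam} (h : St m n) :
    ∀ d p q, St p q → St (subst d p m) (subst d q n) := by
  induction h with
  | var h2 =>
    intro d p q hpq
    have hh := hap_subst h2 d p
    simp only [subst] at hh
    split_ifs at hh with h1 h3
    · exact st_of_hap hh (by simp only [subst, if_pos h1]; exact hpq)
    · exact st_of_hap hh
        (by simp only [subst, if_neg h1, if_pos h3]; exact St.refl _)
    · exact st_of_hap hh
        (by simp only [subst, if_neg h1, if_neg h3]; exact St.refl _)
  | lam h2 _ ih =>
    intro d p q hpq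
    have hh := hap_subst h2 d p
    simp only [subst] at hh ⊢
    exact St.lam hh (ih (d+1) _ _ (st_lift hpq 0))
  | app h2 _ _ ih1 ih2 =>
    intro d p q hpq
    have hh := hap_subst h2 d p
    simp only [subst] at hh ⊢
    exact St.app hh (ih1 d _ _ hpq) (ih2 d _ _ hpq)

theorem st_step {m n n' : Lam} (h : St m n) (hs : Step n n') : St m n' := by
  induction hs generalizing m with
  | beta a b =>
    cases h with
    | app h2 h3 h4 =>
      cases h3 with
      | lam h5 h6 =>
        have hap2 : Hap m (app (lam _) _) := h2.trans (hap_appL _ h5)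
        have : Hap m (subst 0 _ _) := hap2.trans (.single (Whr.beta _ _))
        exact st_of_hap this (st_subst h6 0 _ _ h4)
  | appL v _ ih =>
    cases h with
    | app h2 h3 h4 => exact St.app h2 (ih h3) h4
  | appR u _ ih =>
    cases h with
    | app h2 h3 h4 => exact St.app h2 h3 (ih h4)
  | lam _ ih =>
    cases h with
    | lam h2 h3 => exact St.lam h2 (ih h3)

theorem st_of_steps {m n : Lam} (h : Steps m n) : St m n := by
  induction h with
  | refl => exact St.refl m
  | tail _ hstep ih => exact st_step ih hstep

/-! ### From standard reduction to head normalization -/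

theorem whr_isApp {u v : Lam} (h : Whr u v) : ∃ a b, u = app a b := by
  cases h <;> exact ⟨_, _, rfl⟩

theorem headStep_of_whr {u v : Lam} (h : Whr u v) : HeadStep u v := by
  induction h with
  | beta a b => exact HeadStep.beta a b
  | appL v hw ih =>
    obtain ⟨a, b, rfl⟩ := whr_isApp hw
    exact HeadStep.appL v ih (by intro w hw'; cases hw')

theorem heads_of_hap {u v : Lam} (h : Hap u v) : Heads u v :=
  Relation.ReflTransGen.mono (fun _ _ hs => headStep_of_whr hs) _ _ h

theorem heads_lam {u v : Lam} (h : Heads u v) : Heads (lam u) (lam v) :=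
  Relation.ReflTransGen.lift (fun x => lam x) (fun _ _ hs => HeadStep.lam hs) _ _ h

theorem not_lam_of_heads_neutral {u P : Lam} (h : Heads u P) (hP : NeutralHNF P) :
    ∀ w, u ≠ lam w := by
  induction h using Relation.ReflTransGen.head_induction_on with
  | refl => exact hP.not_lam
  | head hstep _ ih =>
    intro w hw
    subst hw
    cases hstep with
    | lam h' => exact ih _ rfl

theorem heads_appL_neutral {u P : Lam} (v : Lam) (h : Heads u P)
    (hP : NeutralHNF P) : Heads (app u v) (app P v) := by
  induction h using Relation.ReflTransGen.head_induction_on with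
  | refl => exact .refl
  | head hstep htail ih =>
    exact Relation.ReflTransGen.head
      (HeadStep.appL v hstep (not_lam_of_heads_neutral
        (Relation.ReflTransGen.head hstep htail) hP)) ih

theorem neutral_no_headStep {P : Lam} (h : NeutralHNF P) :
    ∀ w, ¬ HeadStep P w := by
  induction h with
  | var n => intro w hw; cases hw
  | app v hn ih =>
    intro w hw
    cases hw with
    | beta a b => exact hn.not_lam a rfl
    | appL _ hs _ => exact ih _ hs

theorem st_neutral_extract {m n : Lam} (h : St m n) (hn : NeutralHNF n) :
    ∃ P, Heads m P ∧ NeutralHNF P := by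
  induction hn generalizing m with
  | var k =>
    cases h with
    | var h2 => exact ⟨_, heads_of_hap h2, NeutralHNF.var _⟩
  | app v hn ih =>
    cases h with
    | app h2 h3 h4 =>
      obtain ⟨P1, hP1, hPn⟩ := ih h3
      exact ⟨app P1 _, (heads_of_hap h2).trans (heads_appL_neutral _ hP1 hPn),
        NeutralHNF.app _ hPn⟩

theorem st_hnf_extract {m n : Lam} (h : St m n) (hn : HNF n) :
    ∃ H, Heads m H ∧ ∀ w, ¬ HeadStep H w := by
  induction hn generalizing m with
  | of hne =>
    obtain ⟨P, hP, hPn⟩ := st_neutral_extract h hne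
    exact ⟨P, hP, neutral_no_headStep hPn⟩
  | lam _ ih =>
    cases h with
    | lam h2 h3 =>
      obtain ⟨H, hH, hHn⟩ := ih h3
      refine ⟨lam H, (heads_of_hap h2).trans (heads_lam hH), ?_⟩
      intro w hw
      cases hw with
      | lam hs => exact hHn _ hs

/-- A term β-equivalent to a head normal form is solvable: its head
reduction terminates. -/
theorem solvable_of_betaEq_hnf {t h : Lam} (he : BetaEq t h) (hh : HNF h) :
    ∃ h' : Lam, Heads t h' ∧ ∀ w, ¬ HeadStep h' w := by
  obtain ⟨k, ht, hk⟩ := betaEq_join he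
  exact st_hnf_extract (st_of_steps ht) (hnf_steps hh hk)

end Lam
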